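/- For any n×n complex matrices A, B and any matrix X, and for every j: s_j(A X B*) ≤ ‖X‖ · s_j(A ⊕ B)², where ‖X‖ is the operator norm. -/

import Mathlib

open Matrix
open scoped ComplexOrder

/-- The `j`-th largest singular value of a square complex matrix (`j : Fin m`, zero-indexed,
so `sv A 0` is the largest singular value). It is defined as the square root of the `j`-th
largest eigenvalue of `Aᴴ * A`. -/
noncomputable def sv {m : ℕ} (A : Matrix (Fin m) (Fin m) ℂ) (j : Fin m) : ℝ :=
  Real.sqrt ((Matrix.isHermitian_conjTranspose_mul_self A).eigenvalues
    (Tuple.sort ((Matrix.isHermitian_conjTranspose_mul_self A).eigenvalues) j.rev))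

/-- The positive semidefinite square root of a positive semidefinite matrix (the former
Mathlib definition `Matrix.PosSemidef.sqrt`, spelled out). -/
noncomputable def psdSqrt {m : ℕ} {P : Matrix (Fin m) (Fin m) ℂ} (hA : P.PosSemidef) :
    Matrix (Fin m) (Fin m) ℂ :=
  hA.1.eigenvectorUnitary.1 * diagonal ((↑) ∘ (√·) ∘ hA.1.eigenvalues) *
    (star hA.1.eigenvectorUnitary : Matrix (Fin m) (Fin m) ℂ)

theorem psdSqrt_isHermitian {m : ℕ} {P : Matrix (Fin m) (Fin m) ℂ} (hA : P.PosSemidef) :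
    (psdSqrt hA).IsHermitian := by
  unfold psdSqrt
  unfold Matrix.IsHermitian
  rw [conjTranspose_mul, conjTranspose_mul, diagonal_conjTranspose]
  have h : star (Complex.ofReal ∘ (√·) ∘ hA.1.eigenvalues) =
      Complex.ofReal ∘ (√·) ∘ hA.1.eigenvalues := by
    funext i
    exact Complex.conj_ofReal _
  simp only [h, Matrix.star_eq_conjTranspose, conjTranspose_conjTranspose, Matrix.mul_assoc]

/-- The absolute value `|A| = (Aᴴ A)^{1/2}` of a square complex matrix. -/
noncomputable def matAbs {m : ℕ} (A : Matrix (Fin m) (Fin m) ℂ) : Matrix (Fin m) (Fin m) ℂ :=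
  psdSqrt (Matrix.posSemidef_conjTranspose_mul_self A)

/-- The `2n × 2n` block matrix `[[A, B], [C, D]]`, reindexed by `Fin (n + n)`. -/
noncomputable def blk {n : ℕ} (A B C D : Matrix (Fin n) (Fin n) ℂ) :
    Matrix (Fin (n + n)) (Fin (n + n)) ℂ :=
  Matrix.reindex finSumFinEquiv finSumFinEquiv (Matrix.fromBlocks A B C D)

/-- `f(P)` for a Hermitian matrix `P`, via the spectral functional calculus. -/
noncomputable def herCfc {m : ℕ} {P : Matrix (Fin m) (Fin m) ℂ} (hP : P.IsHermitian)
    (f : ℝ → ℝ) : Matrix (Fin m) (Fin m) ℂ :=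
  hP.cfc f

/-- `|A| ^ r` (real power of the absolute value), via the functional calculus. -/
noncomputable def matAbsPow {m : ℕ} (A : Matrix (Fin m) (Fin m) ℂ) (r : ℝ) :
    Matrix (Fin m) (Fin m) ℂ :=
  herCfc (psdSqrt_isHermitian (Matrix.posSemidef_conjTranspose_mul_self A)) (fun t => t ^ r)

/-- `f(|A|)`, via the functional calculus. -/
noncomputable def matAbsCfc {m : ℕ} (A : Matrix (Fin m) (Fin m) ℂ) (f : ℝ → ℝ) :
    Matrix (Fin m) (Fin m) ℂ :=
  herCfc (psdSqrt_isHermitian (Matrix.posSemidef_conjTranspose_mul_self A)) f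

/-- The operator norm: the largest singular value. -/
noncomputable def opNorm {m : ℕ} (A : Matrix (Fin m) (Fin m) ℂ) : ℝ :=
  ⨆ j, sv A j

namespace SVAux

variable {m : ℕ}

/-- The (unsorted) eigenvalues of `Cᴴ * C`. -/
noncomputable def eig (C : Matrix (Fin m) (Fin m) ℂ) : Fin m → ℝ :=
  (Matrix.isHermitian_conjTranspose_mul_self C).eigenvalues

/-- sorted (ascending) eigenvalues of `Cᴴ * C`. -/
noncomputable def sEig (C : Matrix (Fin m) (Fin m) ℂ) : Fin m → ℝ :=
  eig C ∘ Tuple.sort (eig C)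

lemma sEig_mono (C : Matrix (Fin m) (Fin m) ℂ) : Monotone (sEig C) :=
  Tuple.monotone_sort _

lemma eig_nonneg (C : Matrix (Fin m) (Fin m) ℂ) (i : Fin m) : 0 ≤ eig C i :=
  (Matrix.posSemidef_conjTranspose_mul_self C).eigenvalues_nonneg i

lemma sEig_nonneg (C : Matrix (Fin m) (Fin m) ℂ) (p : Fin m) : 0 ≤ sEig C p :=
  eig_nonneg C _

lemma sv_eq (C : Matrix (Fin m) (Fin m) ℂ) (j : Fin m) :
    sv C j = Real.sqrt (sEig C j.rev) := rfl

lemma sv_nonneg (C : Matrix (Fin m) (Fin m) ℂ) (j : Fin m) : 0 ≤ sv C j :=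
  Real.sqrt_nonneg _

lemma sq_sv (C : Matrix (Fin m) (Fin m) ℂ) (j : Fin m) :
    sv C j ^ 2 = sEig C j.rev := Real.sq_sqrt (sEig_nonneg C _)

/-- eigenvector basis of `Cᴴ * C`. -/
noncomputable def evb (C : Matrix (Fin m) (Fin m) ℂ) :
    OrthonormalBasis (Fin m) ℂ (EuclideanSpace ℂ (Fin m)) :=
  (Matrix.isHermitian_conjTranspose_mul_self C).eigenvectorBasis

lemma toEuclideanLin_mul_apply (M N : Matrix (Fin m) (Fin m) ℂ) (x : EuclideanSpace ℂ (Fin m)) :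
    Matrix.toEuclideanLin (M * N) x = Matrix.toEuclideanLin M (Matrix.toEuclideanLin N x) := by
  simp [Matrix.toEuclideanLin_apply, ← Matrix.mulVec_mulVec]

lemma lin_evb (C : Matrix (Fin m) (Fin m) ℂ) (i : Fin m) :
    Matrix.toEuclideanLin (Cᴴ * C) (evb C i) = ((eig C i : ℝ) : ℂ) • evb C i := by
  have h := (Matrix.isHermitian_conjTranspose_mul_self C).mulVec_eigenvectorBasis i
  rw [Matrix.toEuclideanLin_apply]
  apply (WithLp.equiv 2 _).injective
  simp only [WithLp.equiv_apply, WithLp.ofLp_smul]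
  rw [show (evb C) i = (Matrix.isHermitian_conjTranspose_mul_self C).eigenvectorBasis i from rfl, h,
    RCLike.real_smul_eq_coe_smul (K := ℂ)]
  rfl

lemma repr_lin (C : Matrix (Fin m) (Fin m) ℂ) (x : EuclideanSpace ℂ (Fin m)) (i : Fin m) :
    (evb C).repr (Matrix.toEuclideanLin (Cᴴ * C) x) i = (eig C i : ℂ) * (evb C).repr x i := by
  rw [OrthonormalBasis.repr_apply_apply, OrthonormalBasis.repr_apply_apply]
  have hadj : Matrix.toEuclideanLin (Cᴴ * C)
      = LinearMap.adjoint (Matrix.toEuclideanLin (Cᴴ * C)) := by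
    conv_lhs => rw [show (Cᴴ * C) = (Cᴴ * C)ᴴ by
      rw [Matrix.conjTranspose_mul, Matrix.conjTranspose_conjTranspose]]
    exact Matrix.toEuclideanLin_conjTranspose_eq_adjoint _
  calc inner ℂ (evb C i) (Matrix.toEuclideanLin (Cᴴ * C) x)
      = inner ℂ (evb C i) (LinearMap.adjoint (Matrix.toEuclideanLin (Cᴴ * C)) x) := by rw [← hadj]
    _ = inner ℂ (Matrix.toEuclideanLin (Cᴴ * C) (evb C i)) x := by
        rw [LinearMap.adjoint_inner_right]
    _ = (eig C i : ℂ) * inner ℂ (evb C i) x := by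
        rw [lin_evb C i, inner_smul_left]
        simp [Complex.conj_ofReal]

lemma norm_lin_sq (C : Matrix (Fin m) (Fin m) ℂ) (x : EuclideanSpace ℂ (Fin m)) :
    ‖Matrix.toEuclideanLin C x‖ ^ 2 = ∑ i, eig C i * ‖(evb C).repr x i‖ ^ 2 := by
  have h2 : (inner ℂ x (Matrix.toEuclideanLin (Cᴴ * C) x) : ℂ)
      = inner ℂ (Matrix.toEuclideanLin C x) (Matrix.toEuclideanLin C x) := by
    rw [toEuclideanLin_mul_apply, Matrix.toEuclideanLin_conjTranspose_eq_adjoint,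
      LinearMap.adjoint_inner_right]
  have h3 : (inner ℂ x (Matrix.toEuclideanLin (Cᴴ * C) x) : ℂ)
      = ∑ i, (eig C i : ℂ) * ((starRingEnd ℂ) ((evb C).repr x i) * (evb C).repr x i) := by
    rw [← (evb C).repr.inner_map_map x (Matrix.toEuclideanLin (Cᴴ * C) x), PiLp.inner_apply]
    refine Finset.sum_congr rfl fun i _ => ?_
    rw [RCLike.inner_apply, repr_lin]
    ring
  have h4 := congrArg Complex.re h3
  rw [h2] at h4
  rw [← inner_self_eq_norm_sq (𝕜 := ℂ), RCLike.re_to_complex, h4, Complex.re_sum]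
  refine Finset.sum_congr rfl fun i _ => ?_
  rw [Complex.conj_mul']
  norm_cast

lemma norm_sq_repr (C : Matrix (Fin m) (Fin m) ℂ) (x : EuclideanSpace ℂ (Fin m)) :
    ‖x‖ ^ 2 = ∑ i, ‖(evb C).repr x i‖ ^ 2 := by
  rw [← (evb C).repr.norm_map x, EuclideanSpace.norm_eq,
    Real.sq_sqrt (Finset.sum_nonneg fun i _ => sq_nonneg _)]

lemma repr_eq_zero_of_mem_span (C : Matrix (Fin m) (Fin m) ℂ) (S : Finset (Fin m))
    (x : EuclideanSpace ℂ (Fin m)) (hx : x ∈ Submodule.span ℂ (evb C '' S))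
    (i : Fin m) (hi : i ∉ S) : (evb C).repr x i = 0 := by
  rw [OrthonormalBasis.repr_apply_apply]
  have hle : Submodule.span ℂ ((evb C) '' S)
      ≤ LinearMap.ker (innerSL ℂ ((evb C) i)).toLinearMap := by
    rw [Submodule.span_le]
    rintro - ⟨a, ha, rfl⟩
    simp only [SetLike.mem_coe, LinearMap.mem_ker, ContinuousLinearMap.coe_coe, innerSL_apply_apply]
    exact (evb C).orthonormal.2 (fun h => hi (h ▸ ha))
  simpa using hle hx

lemma finrank_span_evb (C : Matrix (Fin m) (Fin m) ℂ) (S : Finset (Fin m)) :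
    Module.finrank ℂ (Submodule.span ℂ (evb C '' S)) = S.card := by
  have hli : LinearIndependent ℂ (fun a : {y // y ∈ S} => evb C a) :=
    (evb C).orthonormal.linearIndependent.comp Subtype.val Subtype.val_injective
  have h := finrank_span_eq_card hli
  rw [Fintype.card_coe] at h
  rw [← h]
  have hset : (Set.range fun a : {y // y ∈ S} => evb C a) = evb C '' S := by
    rw [show (fun a : {y // y ∈ S} => evb C a) = evb C ∘ Subtype.val from rfl, Set.range_comp,
      Subtype.range_coe]
  rw [hset]

lemma sums_on_span (C : Matrix (Fin m) (Fin m) ℂ) (S : Finset (Fin m))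
    (x : EuclideanSpace ℂ (Fin m)) (hx : x ∈ Submodule.span ℂ (evb C '' S)) :
    ‖Matrix.toEuclideanLin C x‖ ^ 2 = ∑ i ∈ S, eig C i * ‖(evb C).repr x i‖ ^ 2
    ∧ ‖x‖ ^ 2 = ∑ i ∈ S, ‖(evb C).repr x i‖ ^ 2 := by
  constructor
  · rw [norm_lin_sq]
    refine (Finset.sum_subset (Finset.subset_univ S) fun i _ hi => ?_).symm
    rw [repr_eq_zero_of_mem_span C S x hx i hi]
    simp
  · rw [norm_sq_repr C]
    refine (Finset.sum_subset (Finset.subset_univ S) fun i _ hi => ?_).symm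
    rw [repr_eq_zero_of_mem_span C S x hx i hi]
    simp

lemma norm_le_on_span (C : Matrix (Fin m) (Fin m) ℂ) (S : Finset (Fin m)) (t : ℝ) (ht : 0 ≤ t)
    (hS : ∀ i ∈ S, eig C i ≤ t ^ 2)
    (x : EuclideanSpace ℂ (Fin m)) (hx : x ∈ Submodule.span ℂ (evb C '' S)) :
    ‖Matrix.toEuclideanLin C x‖ ≤ t * ‖x‖ := by
  obtain ⟨h1, h2⟩ := sums_on_span C S x hx
  have hsq : ‖Matrix.toEuclideanLin C x‖ ^ 2 ≤ (t * ‖x‖) ^ 2 := by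
    rw [h1, mul_pow, h2, Finset.mul_sum]
    exact Finset.sum_le_sum fun i hi =>
      mul_le_mul_of_nonneg_right (hS i hi) (sq_nonneg _)
  have := Real.sqrt_le_sqrt hsq
  rwa [Real.sqrt_sq (norm_nonneg _), Real.sqrt_sq (by positivity)] at this

lemma norm_ge_on_span (C : Matrix (Fin m) (Fin m) ℂ) (S : Finset (Fin m)) (t : ℝ) (ht : 0 ≤ t)
    (hS : ∀ i ∈ S, t ^ 2 ≤ eig C i)
    (x : EuclideanSpace ℂ (Fin m)) (hx : x ∈ Submodule.span ℂ (evb C '' S)) :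
    t * ‖x‖ ≤ ‖Matrix.toEuclideanLin C x‖ := by
  obtain ⟨h1, h2⟩ := sums_on_span C S x hx
  have hsq : (t * ‖x‖) ^ 2 ≤ ‖Matrix.toEuclideanLin C x‖ ^ 2 := by
    rw [h1, mul_pow, h2, Finset.mul_sum]
    exact Finset.sum_le_sum fun i hi =>
      mul_le_mul_of_nonneg_right (hS i hi) (sq_nonneg _)
  have := Real.sqrt_le_sqrt hsq
  rwa [Real.sqrt_sq (norm_nonneg _), Real.sqrt_sq (by positivity)] at this

lemma exists_good_subspace (C : Matrix (Fin m) (Fin m) ℂ) (j : Fin m) :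
    ∃ V : Submodule ℂ (EuclideanSpace ℂ (Fin m)), m - j.val ≤ Module.finrank ℂ V ∧
      ∀ x ∈ V, ‖Matrix.toEuclideanLin C x‖ ≤ sv C j * ‖x‖ := by
  classical
  set σ := Tuple.sort (eig C) with hσ
  set S : Finset (Fin m) := (Finset.Iic j.rev).image σ with hS
  refine ⟨Submodule.span ℂ (evb C '' S), ?_, ?_⟩
  · rw [finrank_span_evb, hS, Finset.card_image_of_injective _ σ.injective, Fin.card_Iic,
      Fin.val_rev]
    omega
  · intro x hx
    refine norm_le_on_span C S (sv C j) (sv_nonneg C j) ?_ x hx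
    intro i hi
    rw [sq_sv]
    rw [hS, Finset.mem_image] at hi
    obtain ⟨p, hp, rfl⟩ := hi
    rw [Finset.mem_Iic] at hp
    exact sEig_mono C hp

lemma sv_le_of_subspace (C : Matrix (Fin m) (Fin m) ℂ) (j : Fin m) (c : ℝ) (hc : 0 ≤ c)
    (V : Submodule ℂ (EuclideanSpace ℂ (Fin m))) (hV : m - j.val ≤ Module.finrank ℂ V)
    (hb : ∀ x ∈ V, ‖Matrix.toEuclideanLin C x‖ ≤ c * ‖x‖) :
    sv C j ≤ c := by
  classical
  set σ := Tuple.sort (eig C) with hσ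
  set S : Finset (Fin m) := (Finset.Ici j.rev).image σ with hS
  set W := Submodule.span ℂ (evb C '' S) with hW
  have hcardS : S.card = j.val + 1 := by
    rw [hS, Finset.card_image_of_injective _ σ.injective, Fin.card_Ici, Fin.val_rev]
    omega
  have hfrW : Module.finrank ℂ W = j.val + 1 := by rw [hW, finrank_span_evb, hcardS]
  have hne : V ⊓ W ≠ ⊥ := by
    intro hbot
    have h1 := Submodule.finrank_sup_add_finrank_inf_eq V W
    rw [hbot, finrank_bot] at h1
    have h2 : Module.finrank ℂ ↥(V ⊔ W) ≤ m := by
      have := Submodule.finrank_le (V ⊔ W)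
      rwa [finrank_euclideanSpace_fin] at this
    have := j.isLt
    omega
  obtain ⟨x, hx, hxne⟩ := Submodule.exists_mem_ne_zero_of_ne_bot hne
  rw [Submodule.mem_inf] at hx
  have hlow : sv C j * ‖x‖ ≤ ‖Matrix.toEuclideanLin C x‖ := by
    refine norm_ge_on_span C S (sv C j) (sv_nonneg C j) ?_ x hx.2
    intro i hi
    rw [sq_sv]
    rw [hS, Finset.mem_image] at hi
    obtain ⟨p, hp, rfl⟩ := hi
    rw [Finset.mem_Ici] at hp
    exact sEig_mono C hp
  have hup := hb x hx.1
  have hxpos : 0 < ‖x‖ := norm_pos_iff.mpr hxne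
  exact le_of_mul_le_mul_right (hlow.trans hup) hxpos

lemma finrank_comap_ge (f : (EuclideanSpace ℂ (Fin m)) →ₗ[ℂ] (EuclideanSpace ℂ (Fin m)))
    (W : Submodule ℂ (EuclideanSpace ℂ (Fin m))) :
    Module.finrank ℂ W ≤ Module.finrank ℂ (Submodule.comap f W) := by
  have hker : Submodule.comap f W = LinearMap.ker (W.mkQ.comp f) := by
    rw [LinearMap.ker_comp, Submodule.ker_mkQ]
  have h1 := LinearMap.finrank_range_add_finrank_ker (W.mkQ.comp f)
  have h2 : Module.finrank ℂ (LinearMap.range (W.mkQ.comp f))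
      ≤ Module.finrank ℂ ((EuclideanSpace ℂ (Fin m)) ⧸ W) := Submodule.finrank_le _
  have h3 := Submodule.finrank_quotient_add_finrank W
  rw [finrank_euclideanSpace_fin] at h1 h3
  rw [hker]
  omega

lemma horn (M N : Matrix (Fin m) (Fin m) ℂ) (i k : Fin m) (h : i.val + k.val < m) :
    sv (M * N) ⟨i.val + k.val, h⟩ ≤ sv M i * sv N k := by
  obtain ⟨VM, hVM, hbM⟩ := exists_good_subspace M i
  obtain ⟨VN, hVN, hbN⟩ := exists_good_subspace N k
  set U := Submodule.comap (Matrix.toEuclideanLin N) VM with hU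
  set V := VN ⊓ U with hV
  have hfr : m - (i.val + k.val) ≤ Module.finrank ℂ V := by
    have h1 := Submodule.finrank_sup_add_finrank_inf_eq VN U
    have h2 : Module.finrank ℂ ↥(VN ⊔ U) ≤ m := by
      have := Submodule.finrank_le (VN ⊔ U)
      rwa [finrank_euclideanSpace_fin] at this
    have h3 := finrank_comap_ge (Matrix.toEuclideanLin N) VM
    rw [← hU] at h3
    have hi := i.isLt
    have hk := k.isLt
    rw [hV]
    omega
  refine sv_le_of_subspace (M * N) ⟨i.val + k.val, h⟩ _
    (mul_nonneg (sv_nonneg M i) (sv_nonneg N k)) V hfr ?_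
  intro x hx
  rw [Submodule.mem_inf] at hx
  rw [toEuclideanLin_mul_apply]
  calc ‖Matrix.toEuclideanLin M (Matrix.toEuclideanLin N x)‖
      ≤ sv M i * ‖Matrix.toEuclideanLin N x‖ := hbM _ (Submodule.mem_comap.mp hx.2)
    _ ≤ sv M i * (sv N k * ‖x‖) :=
        mul_le_mul_of_nonneg_left (hbN x hx.1) (sv_nonneg M i)
    _ = sv M i * sv N k * ‖x‖ := by ring

lemma sv_conjTranspose_le (C : Matrix (Fin m) (Fin m) ℂ) (j : Fin m) :
    sv Cᴴ j ≤ sv C j := by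
  obtain ⟨V, hV, hb⟩ := exists_good_subspace C j
  set f := Matrix.toEuclideanLin C with hf
  set V' := (Submodule.map f Vᗮ)ᗮ with hV'
  have hfr : m - j.val ≤ Module.finrank ℂ V' := by
    have h1 := Submodule.finrank_add_finrank_orthogonal (Submodule.map f Vᗮ)
    have h2 : Module.finrank ℂ (Submodule.map f Vᗮ) ≤ Module.finrank ℂ Vᗮ :=
      Submodule.finrank_map_le f Vᗮ
    have h3 := Submodule.finrank_add_finrank_orthogonal V
    rw [finrank_euclideanSpace_fin] at h1 h3
    rw [hV']
    omega
  refine sv_le_of_subspace Cᴴ j _ (sv_nonneg C j) V' hfr ?_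
  intro y hy
  set z := Matrix.toEuclideanLin Cᴴ y with hz
  set z₁ : EuclideanSpace ℂ (Fin m) := (V.orthogonalProjectionOnto z : EuclideanSpace ℂ (Fin m))
    with hz₁
  have hz₁mem : z₁ ∈ V := (V.orthogonalProjectionOnto z).2
  have hz₂mem : z - z₁ ∈ Vᗮ := Submodule.sub_starProjection_mem_orthogonal (K := V) z
  -- ⟪z, z - z₁⟫-component vanishes against y
  have hadj : (inner ℂ z z : ℂ) = inner ℂ y (f z) := by
    rw [hz, Matrix.toEuclideanLin_conjTranspose_eq_adjoint, LinearMap.adjoint_inner_left]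
  have hsplit : (inner ℂ z z : ℂ) = inner ℂ y (f z₁) + inner ℂ y (f (z - z₁)) := by
    have hdecomp : f z = f z₁ + f (z - z₁) := by rw [← map_add, add_sub_cancel]
    rw [hadj, hdecomp, inner_add_right]
  have hzero : (inner ℂ y (f (z - z₁)) : ℂ) = 0 := by
    have hmem : f (z - z₁) ∈ Submodule.map f Vᗮ := Submodule.mem_map_of_mem hz₂mem
    have := (Submodule.mem_orthogonal _ y).mp hy _ hmem
    rw [← inner_conj_symm, this, map_zero]
  have hnorm_z₁ : ‖z₁‖ ≤ ‖z‖ := by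
    have hd : (inner ℂ z₁ (z - z₁) : ℂ) = 0 :=
      (Submodule.mem_orthogonal _ _).mp hz₂mem z₁ hz₁mem
    have h := norm_add_sq_eq_norm_sq_add_norm_sq_of_inner_eq_zero z₁ (z - z₁) hd
    have hzz : z₁ + (z - z₁) = z := by abel
    rw [hzz] at h
    nlinarith [sq_nonneg ‖z - z₁‖, norm_nonneg z, norm_nonneg z₁]
  have hnormsq : ‖z‖ ^ 2 ≤ sv C j * ‖y‖ * ‖z‖ := by
    have h1 : ‖z‖ ^ 2 = Complex.re (inner ℂ z z : ℂ) := by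
      rw [← inner_self_eq_norm_sq (𝕜 := ℂ), RCLike.re_to_complex]
    have h2 : Complex.re (inner ℂ z z : ℂ) = Complex.re (inner ℂ y (f z₁) : ℂ) := by
      rw [hsplit, hzero, add_zero]
    have h3 : Complex.re (inner ℂ y (f z₁) : ℂ) ≤ ‖y‖ * ‖f z₁‖ := by
      calc Complex.re (inner ℂ y (f z₁) : ℂ) ≤ ‖(inner ℂ y (f z₁) : ℂ)‖ := Complex.re_le_norm _
        _ ≤ ‖y‖ * ‖f z₁‖ := norm_inner_le_norm _ _
    have h4 : ‖f z₁‖ ≤ sv C j * ‖z₁‖ := hb z₁ hz₁mem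
    have h5 : sv C j * ‖z₁‖ ≤ sv C j * ‖z‖ :=
      mul_le_mul_of_nonneg_left hnorm_z₁ (sv_nonneg C j)
    calc ‖z‖ ^ 2 = Complex.re (inner ℂ y (f z₁) : ℂ) := by rw [h1, h2]
      _ ≤ ‖y‖ * ‖f z₁‖ := h3
      _ ≤ ‖y‖ * (sv C j * ‖z‖) := by
          refine mul_le_mul_of_nonneg_left (h4.trans h5) (norm_nonneg _)
      _ = sv C j * ‖y‖ * ‖z‖ := by ring
  rcases eq_or_ne z 0 with hz0 | hz0
  · rw [hz0, norm_zero]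
    exact mul_nonneg (sv_nonneg C j) (norm_nonneg _)
  · have hzpos : 0 < ‖z‖ := norm_pos_iff.mpr hz0
    have := le_of_mul_le_mul_right (by nlinarith : ‖z‖ * ‖z‖ ≤ (sv C j * ‖y‖) * ‖z‖) hzpos
    exact this

lemma sv_conjTranspose (C : Matrix (Fin m) (Fin m) ℂ) (j : Fin m) :
    sv Cᴴ j = sv C j := by
  refine le_antisymm (sv_conjTranspose_le C j) ?_
  have := sv_conjTranspose_le Cᴴ j
  rwa [Matrix.conjTranspose_conjTranspose] at this

end SVAux

section SpecSec
open Polynomial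
variable {m : ℕ}

lemma charmatrix_conj (U D : Matrix (Fin m) (Fin m) ℂ) (hU : U ∈ Matrix.unitaryGroup (Fin m) ℂ) :
    charmatrix (U * D * star U) =
      (C : ℂ →+* ℂ[X]).mapMatrix U * charmatrix D * (C : ℂ →+* ℂ[X]).mapMatrix (star U) := by
  have hUU : U * star U = 1 := Matrix.mem_unitaryGroup_iff.mp hU
  have hscal : (C : ℂ →+* ℂ[X]).mapMatrix U * Matrix.scalar (Fin m) (X : ℂ[X])
      * (C : ℂ →+* ℂ[X]).mapMatrix (star U) = Matrix.scalar (Fin m) (X : ℂ[X]) := by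
    rw [← (Matrix.scalar_commute (X : ℂ[X]) (fun r' => Commute.all _ _) _).eq, mul_assoc,
      ← _root_.map_mul ((C : ℂ →+* ℂ[X]).mapMatrix), hUU, _root_.map_one, mul_one]
  calc charmatrix (U * D * star U)
      = Matrix.scalar (Fin m) (X : ℂ[X]) - (C : ℂ →+* ℂ[X]).mapMatrix (U * D * star U) := rfl
    _ = (C : ℂ →+* ℂ[X]).mapMatrix U * charmatrix D * (C : ℂ →+* ℂ[X]).mapMatrix (star U) := by
        rw [charmatrix, mul_sub, sub_mul, hscal]
        simp only [_root_.map_mul]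

lemma charpoly_conj (U D : Matrix (Fin m) (Fin m) ℂ) (hU : U ∈ Matrix.unitaryGroup (Fin m) ℂ) :
    (U * D * star U).charpoly = D.charpoly := by
  rw [Matrix.charpoly, charmatrix_conj U D hU, Matrix.det_mul, Matrix.det_mul]
  have h1 : ((C : ℂ →+* ℂ[X]).mapMatrix U).det = C U.det := (RingHom.map_det _ _).symm
  have h2 : ((C : ℂ →+* ℂ[X]).mapMatrix (star U)).det = C (star U).det :=
    (RingHom.map_det _ _).symm
  have h3 : star U * U = 1 := (Unitary.mem_iff.mp hU).1
  rw [h1, h2, mul_comm (C U.det * _ : ℂ[X]) (C (star U).det), ← mul_assoc,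
    ← _root_.map_mul (C : ℂ →+* ℂ[X]), ← Matrix.det_mul, h3]
  simp [Matrix.charpoly]

lemma charpoly_diag (d : Fin m → ℂ) :
    (Matrix.diagonal d).charpoly = ∏ i, (X - C (d i)) := by
  rw [Matrix.charpoly]
  have : charmatrix (Matrix.diagonal d) = Matrix.diagonal (fun i => X - C (d i)) := by
    ext i j
    by_cases h : i = j
    · subst h; simp
    · simp [h, Matrix.diagonal_apply_ne _ h]
  rw [this, Matrix.det_diagonal]

lemma charpoly_hermitian {P : Matrix (Fin m) (Fin m) ℂ} (hP : P.IsHermitian) :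
    P.charpoly = ∏ i, (X - C (hP.eigenvalues i : ℂ)) := by
  conv_lhs => rw [hP.spectral_theorem]
  rw [Unitary.conjStarAlgAut_apply, charpoly_conj _ _ (hP.eigenvectorUnitary).2, charpoly_diag]
  rfl

lemma roots_charpoly_hermitian {P : Matrix (Fin m) (Fin m) ℂ} (hP : P.IsHermitian) :
    P.charpoly.roots = Multiset.map (fun i => (hP.eigenvalues i : ℂ)) Finset.univ.val := by
  rw [charpoly_hermitian hP]
  have := Polynomial.roots_multiset_prod_X_sub_C
    (Multiset.map (fun i => (hP.eigenvalues i : ℂ)) Finset.univ.val)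
  rw [← this]
  congr 1
  rw [Multiset.map_map]
  rfl
end SpecSec

section BlkSec
open Polynomial
variable {n : ℕ}

lemma blk_conjTranspose_mul_self (A B : Matrix (Fin n) (Fin n) ℂ) :
    (blk A 0 0 B)ᴴ * blk A 0 0 B =
      Matrix.reindex finSumFinEquiv finSumFinEquiv (Matrix.fromBlocks (Aᴴ * A) 0 0 (Bᴴ * B)) := by
  rw [blk, Matrix.conjTranspose_reindex]
  have : ∀ (M N : Matrix (Fin n ⊕ Fin n) (Fin n ⊕ Fin n) ℂ),
      (Matrix.reindex finSumFinEquiv finSumFinEquiv M) *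
        (Matrix.reindex finSumFinEquiv finSumFinEquiv N)
      = Matrix.reindex finSumFinEquiv finSumFinEquiv (M * N) := by
    intro M N
    simp only [Matrix.reindex_apply]
    exact Matrix.submatrix_mul_equiv M N _ finSumFinEquiv.symm _
  rw [this]
  congr 1
  rw [Matrix.fromBlocks_conjTranspose, Matrix.fromBlocks_multiply]
  simp

lemma charpoly_blk (A B : Matrix (Fin n) (Fin n) ℂ) :
    ((blk A 0 0 B)ᴴ * blk A 0 0 B).charpoly = (Aᴴ * A).charpoly * (Bᴴ * B).charpoly := by
  rw [blk_conjTranspose_mul_self, Matrix.charpoly_reindex,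
    Matrix.charpoly_fromBlocks_zero₁₂]
end BlkSec

section CntSec
variable {n : ℕ}

lemma card_le_count (f : Fin n → ℝ) (t : ℝ) :
    (Fintype.card {x // f x ≤ t} : ℕ)
      = Multiset.countP (fun y => y ≤ t) (Multiset.map f Finset.univ.val) := by
  classical
  rw [Fintype.card_subtype, Multiset.countP_map]
  rfl

lemma counting (u : Fin (n + n) → ℝ) (a b : Fin n → ℝ)
    (hu : Monotone u) (ha : Monotone a) (hb : Monotone b)
    (hms : Multiset.map u Finset.univ.val
      = Multiset.map a Finset.univ.val + Multiset.map b Finset.univ.val)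
    (j : Fin n) :
    ∃ p q : Fin n, (p.rev.val + q.rev.val = j.val)
      ∧ a p ≤ u ((Fin.castAdd n j).rev) ∧ b q ≤ u ((Fin.castAdd n j).rev) := by
  classical
  set t := u ((Fin.castAdd n j).rev) with ht
  have hposval : ((Fin.castAdd n j).rev : ℕ) = n + n - 1 - j.val := by
    simp [Fin.val_rev]
    omega
  have hT : Fintype.card {x // u x ≤ t} = Fintype.card {x // a x ≤ t}
      + Fintype.card {x // b x ≤ t} := by
    rw [card_le_count, card_le_count, card_le_count, hms, Multiset.countP_add]
  have hTgt : ((Fin.castAdd n j).rev : ℕ) < Fintype.card {x // u x ≤ t} :=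
    by have := (Tuple.lt_card_le_iff_apply_le_of_monotone (j := (Fin.castAdd n j).rev) (a := t) hu).mpr le_rfl
       rwa [← Fintype.card_subtype] at this
  set P := Fintype.card {x // a x ≤ t} with hP
  set Q := Fintype.card {x // b x ≤ t} with hQ
  have hPn : P ≤ n := by
    have := Fintype.card_subtype_le (fun x : Fin n => a x ≤ t)
    simpa using this
  have hQn : Q ≤ n := by
    have := Fintype.card_subtype_le (fun x : Fin n => b x ≤ t)
    simpa using this
  have hj := j.isLt
  rw [hposval] at hTgt
  rw [hT] at hTgt
  refine ⟨⟨P - 1, by omega⟩, ⟨n + n - 1 - j.val - P, by omega⟩, ?_, ?_, ?_⟩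
  · simp only [Fin.val_rev]
    omega
  · exact (Tuple.lt_card_le_iff_apply_le_of_monotone (a := t) ha).mp (by rw [← Fintype.card_subtype]; simp; omega)
  · exact (Tuple.lt_card_le_iff_apply_le_of_monotone (a := t) hb).mp (by rw [← Fintype.card_subtype]; simp; omega)
end CntSec


section Final
open SVAux

lemma map_sEig {m : ℕ} (C : Matrix (Fin m) (Fin m) ℂ) :
    Multiset.map (SVAux.sEig C) Finset.univ.val = Multiset.map (SVAux.eig C) Finset.univ.val := by
  have hperm : Finset.univ.val.map ⇑(Tuple.sort (SVAux.eig C)) = Finset.univ.val := by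
    have h := Finset.map_univ_equiv (Tuple.sort (SVAux.eig C) : Fin m ≃ Fin m)
    calc Finset.univ.val.map ⇑(Tuple.sort (SVAux.eig C))
        = (Finset.univ.map (Tuple.sort (SVAux.eig C)).toEmbedding).val := by
          rw [Finset.map_val]; rfl
      _ = Finset.univ.val := by rw [h]
  calc Multiset.map (SVAux.sEig C) Finset.univ.val
      = Multiset.map (SVAux.eig C) (Finset.univ.val.map ⇑(Tuple.sort (SVAux.eig C))) := by
        rw [Multiset.map_map]; rfl
    _ = Multiset.map (SVAux.eig C) Finset.univ.val := by rw [hperm]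

theorem sv_product_opNorm {n : ℕ} (A B X : Matrix (Fin n) (Fin n) ℂ) :
    ∀ j : Fin n, sv (A * X * Bᴴ) j ≤
      opNorm X * (sv (blk A 0 0 B) (Fin.castAdd n j)) ^ 2 := by
  intro j
  have hroots : Multiset.map (fun i => ((SVAux.eig (blk A 0 0 B) i : ℝ) : ℂ)) Finset.univ.val
      = Multiset.map (fun i => ((SVAux.eig A i : ℝ) : ℂ)) Finset.univ.val
        + Multiset.map (fun i => ((SVAux.eig B i : ℝ) : ℂ)) Finset.univ.val := by
    simp only [SVAux.eig]
    have h1 := roots_charpoly_hermitian (Matrix.isHermitian_conjTranspose_mul_self (blk A 0 0 B))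
    have h2 := roots_charpoly_hermitian (Matrix.isHermitian_conjTranspose_mul_self A)
    have h3 := roots_charpoly_hermitian (Matrix.isHermitian_conjTranspose_mul_self B)
    rw [← h1, ← h2, ← h3, charpoly_blk,
      Polynomial.roots_mul (mul_ne_zero (Matrix.charpoly_monic _).ne_zero
        (Matrix.charpoly_monic _).ne_zero)]
  have hreal : Multiset.map (SVAux.eig (blk A 0 0 B)) Finset.univ.val
      = Multiset.map (SVAux.eig A) Finset.univ.val
        + Multiset.map (SVAux.eig B) Finset.univ.val := by
    apply Multiset.map_injective (f := (fun r : ℝ => (r : ℂ))) Complex.ofReal_injective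
    rw [Multiset.map_add]
    simpa [Multiset.map_map, Function.comp_def] using hroots
  have hsorted : Multiset.map (SVAux.sEig (blk A 0 0 B)) Finset.univ.val
      = Multiset.map (SVAux.sEig A) Finset.univ.val
        + Multiset.map (SVAux.sEig B) Finset.univ.val := by
    rw [map_sEig, map_sEig, map_sEig]; exact hreal
  obtain ⟨p, q, hpq, hap, hbq⟩ := counting (SVAux.sEig (blk A 0 0 B)) (SVAux.sEig A)
    (SVAux.sEig B) (SVAux.sEig_mono _) (SVAux.sEig_mono _) (SVAux.sEig_mono _) hsorted j
  set c := sv (blk A 0 0 B) (Fin.castAdd n j) with hc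
  have hcval : c = Real.sqrt (SVAux.sEig (blk A 0 0 B) ((Fin.castAdd n j).rev)) := rfl
  have hcnn : 0 ≤ c := SVAux.sv_nonneg _ _
  set i : Fin n := p.rev with hi
  set k : Fin n := q.rev with hk
  have hik : i.val + k.val = j.val := hpq
  have hsvA : sv A i ≤ c := by
    rw [SVAux.sv_eq, hcval]
    apply Real.sqrt_le_sqrt
    rw [hi, Fin.rev_rev]
    exact hap
  have hsvB : sv B k ≤ c := by
    rw [SVAux.sv_eq, hcval]
    apply Real.sqrt_le_sqrt
    rw [hk, Fin.rev_rev]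
    exact hbq
  have hz : (0 : ℕ) < n := j.pos
  set z : Fin n := ⟨0, hz⟩ with hzdef
  have hzval : (z : ℕ) = 0 := rfl
  have hjlt := j.isLt
  have hsvX : sv X z ≤ opNorm X :=
    le_ciSup (Set.Finite.bddAbove (Set.finite_range (sv X))) z
  have hXnn : 0 ≤ opNorm X := (SVAux.sv_nonneg X z).trans hsvX
  have h1 : sv (A * (X * Bᴴ)) ⟨i.val + k.val, by omega⟩ ≤ sv A i * sv (X * Bᴴ) k :=
    SVAux.horn A (X * Bᴴ) i k (by omega)
  have h2 : sv (X * Bᴴ) ⟨z.val + k.val, by omega⟩ ≤ sv X z * sv Bᴴ k :=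
    SVAux.horn X Bᴴ z k (by omega)
  have hidx1 : (⟨i.val + k.val, by omega⟩ : Fin n) = j := Fin.ext hik
  have hidx2 : (⟨z.val + k.val, by omega⟩ : Fin n) = k := Fin.ext (by simp [hzdef])
  rw [hidx1] at h1
  rw [hidx2] at h2
  rw [SVAux.sv_conjTranspose] at h2
  have hgoal : sv (A * X * Bᴴ) j ≤ c * (opNorm X * c) := by
    rw [mul_assoc]
    calc sv (A * (X * Bᴴ)) j ≤ sv A i * sv (X * Bᴴ) k := h1
      _ ≤ sv A i * (sv X z * sv B k) :=
          mul_le_mul_of_nonneg_left h2 (SVAux.sv_nonneg A i)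
      _ ≤ c * (opNorm X * c) := by
          refine mul_le_mul hsvA ?_ ?_ hcnn
          · exact mul_le_mul hsvX hsvB (SVAux.sv_nonneg B k) hXnn
          · exact mul_nonneg (SVAux.sv_nonneg X z) (SVAux.sv_nonneg B k)
  calc sv (A * X * Bᴴ) j ≤ c * (opNorm X * c) := hgoal
    _ = opNorm X * c ^ 2 := by ring

end Final
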